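/- Let (λ_n)_{n∈ℕ} be a sequence of pairwise distinct points of the open unit disc of ℂ satisfying the Carleson interpolating condition. Let H be a complex Hilbert space, (x_n)_{n∈ℕ} a sequence of nonzero vectors whose closed linear span is H, and T ∈ B(H) an operator with T x_n = λ_n x_n for every n. Let D ∈ B(ℓ²(ℕ, ℂ)) be the diagonal operator given by (D a)(n) = λ_n·a(n). If T is polynomially bounded, then there exists a continuous linear equivalence X : H → ℓ²(ℕ, ℂ) such that X ∘ T = D ∘ X; that is, T is similar to D. -/

import Mathlib

noncomputable section

/-- An operator `T` is polynomially bounded if `‖p(T)‖ ≤ M · sup_{|z| ≤ 1} |p(z)|`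
for some `M > 0` and all polynomials `p`. -/
def PolynomiallyBounded {H : Type*} [NormedAddCommGroup H] [NormedSpace ℂ H] (T : H →L[ℂ] H) : Prop :=
  ∃ M : ℝ, 0 < M ∧ ∀ p : Polynomial ℂ,
    ‖Polynomial.aeval T p‖ ≤ M * sSup ((fun z : ℂ => ‖p.eval z‖) '' {z : ℂ | ‖z‖ ≤ 1})

/-- A sequence of points of the open unit disc satisfies the Carleson interpolating
condition if the Blaschke-type products over finite sets avoiding an index are uniformly
bounded below. -/
def CarlesonCondition (lam : ℕ → ℂ) : Prop :=
  ∃ δ : ℝ, 0 < δ ∧ ∀ (n : ℕ) (F : Finset ℕ), n ∉ F →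
    δ ≤ ∏ k ∈ F, ‖lam k - lam n‖ / ‖1 - (starRingEnd ℂ) (lam k) * lam n‖

open Metric Finset Complex
open scoped NNReal ENNReal

private lemma csim_one_sub_ne {w : ℂ} (hw : ‖w‖ < 1) : (1 : ℂ) - w ≠ 0 := by
  intro h
  have : w = 1 := by linear_combination -h
  rw [this] at hw; simp at hw

private lemma csim_normSq_pos {w : ℂ} (hw : ‖w‖ < 1) : 0 < Complex.normSq (1 - w) :=
  Complex.normSq_pos.2 (csim_one_sub_ne hw)

private lemma csim_normSq_identity (a b : ℂ) :
    Complex.normSq (1 - (starRingEnd ℂ) a * b) - Complex.normSq (b - a)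
      = (1 - Complex.normSq a) * (1 - Complex.normSq b) := by
  simp only [Complex.normSq_apply, Complex.sub_re, Complex.sub_im, Complex.mul_re,
    Complex.mul_im, Complex.conj_re, Complex.conj_im, Complex.one_re, Complex.one_im]
  ring

private lemma csim_re_c_div (c : ℝ) (w : ℂ) :
    (((c : ℂ)) / (1 - w)).re = c * ((1 : ℝ) - w.re) / Complex.normSq (1 - w) := by
  rw [Complex.div_re]
  simp only [Complex.ofReal_re, Complex.ofReal_im, Complex.sub_re, Complex.sub_im,
    Complex.one_re, Complex.one_im]
  ring

private lemma csim_one_sub_re (w : ℂ) :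
    (1 : ℝ) - w.re = (Complex.normSq (1 - w) + (1 - Complex.normSq w)) / 2 := by
  simp only [Complex.normSq_apply, Complex.sub_re, Complex.sub_im, Complex.one_re, Complex.one_im]
  ring

private lemma csim_re_c_div_eq (c : ℝ) {w : ℂ} (hw : ‖w‖ < 1) :
    (((c : ℂ)) / (1 - w)).re
      = c / 2 + c * (1 - Complex.normSq w) / (2 * Complex.normSq (1 - w)) := by
  have h := csim_normSq_pos hw
  rw [csim_re_c_div, csim_one_sub_re]
  field_simp

/-- On the unit circle, `‖1 - conj(a) z‖ = ‖z - a‖`. -/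
private lemma csim_norm_one_sub_conj_mul (a : ℂ) {z : ℂ} (hz : ‖z‖ = 1) :
    ‖1 - (starRingEnd ℂ) a * z‖ = ‖z - a‖ := by
  have h1 : (1 : ℂ) - (starRingEnd ℂ) a * z = (starRingEnd ℂ) (z - a) * z := by
    have h2 : (starRingEnd ℂ) z * z = 1 := by
      rw [mul_comm, Complex.mul_conj']
      rw [hz]; norm_num
    rw [map_sub, sub_mul, h2]
  rw [h1, norm_mul, hz, RCLike.norm_conj, mul_one]

private lemma csim_exp_core {a : ℝ} (h0 : 0 ≤ a) (h4 : a ≤ 4) :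
    a ≤ 2 * Real.exp 2 * (1 - Real.exp (-a / 2)) := by
  have h1 : a / 2 + 1 ≤ Real.exp (a / 2) := Real.add_one_le_exp _
  have h2 : Real.exp (-a / 2) * Real.exp (a / 2) = 1 := by
    have h : (-a / 2 + a / 2 : ℝ) = 0 := by ring
    rw [← Real.exp_add, h, Real.exp_zero]
  have h3 : Real.exp (-2 : ℝ) ≤ Real.exp (-a / 2) := by
    apply Real.exp_le_exp.2; linarith
  have h4' : Real.exp (2 : ℝ) * Real.exp (-2 : ℝ) = 1 := by
    rw [← Real.exp_add]; norm_num
  have h5 : 0 < Real.exp (-a / 2) := Real.exp_pos _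
  have h6 : 0 < Real.exp (2 : ℝ) := Real.exp_pos _
  nlinarith [mul_pos h5 h6, mul_le_mul_of_nonneg_left h3 (le_of_lt h6)]

/-- The ordered summation lemma: `∑ aⱼ e^{-σⱼ/2} ≤ 2e²`, where `σⱼ` sums `aₖ` over
indices with key at least `r j`. -/
private lemma csim_sum_exp_bound (r a : ℕ → ℝ) :
    ∀ F : Finset ℕ, (∀ j ∈ F, 0 ≤ a j) → (∀ j ∈ F, a j ≤ 4) →
      ∑ j ∈ F, a j * Real.exp (-(∑ k ∈ (F.erase j).filter (fun k => r j ≤ r k), a k) / 2)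
        ≤ 2 * Real.exp 2 * (1 - Real.exp (-(∑ j ∈ F, a j) / 2)) := by
  intro F
  induction F using Finset.strongInduction with
  | _ F ih =>
    intro h0 h4
    rcases F.eq_empty_or_nonempty with rfl | hne
    · simp
    obtain ⟨j₀, hj₀F, hj₀min⟩ := F.exists_min_image r hne
    set F' := F.erase j₀ with hF'
    have hssub : F' ⊂ F := Finset.erase_ssubset hj₀F
    have h0' : ∀ j ∈ F', 0 ≤ a j := fun j hj => h0 j (Finset.mem_of_mem_erase hj)
    have h4' : ∀ j ∈ F', a j ≤ 4 := fun j hj => h4 j (Finset.mem_of_mem_erase hj)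
    have hIH := ih F' hssub h0' h4'
    -- the j₀ term
    have hfilter : (F.erase j₀).filter (fun k => r j₀ ≤ r k) = F' := by
      rw [← hF']
      exact Finset.filter_true_of_mem fun k hk => hj₀min k (Finset.mem_of_mem_erase hk)
    -- each other term only decreases when passing from F' to F
    have hterm : ∀ j ∈ F',
        a j * Real.exp (-(∑ k ∈ (F.erase j).filter (fun k => r j ≤ r k), a k) / 2)
          ≤ a j * Real.exp (-(∑ k ∈ (F'.erase j).filter (fun k => r j ≤ r k), a k) / 2) := by
      intro j hj
      apply mul_le_mul_of_nonneg_left _ (h0' j hj)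
      apply Real.exp_le_exp.2
      have hsub : (F'.erase j).filter (fun k => r j ≤ r k)
          ⊆ (F.erase j).filter (fun k => r j ≤ r k) := by
        apply Finset.filter_subset_filter
        intro k hk
        rcases Finset.mem_erase.1 hk with ⟨hkj, hk'⟩
        exact Finset.mem_erase.2 ⟨hkj, Finset.mem_of_mem_erase hk'⟩
      have := Finset.sum_le_sum_of_subset_of_nonneg hsub (fun i hi _ => by
        rcases Finset.mem_filter.1 hi with ⟨hi', _⟩
        exact h0 i (Finset.mem_of_mem_erase hi'))
      linarith
    have hsplit : ∑ j ∈ F, a j * Real.exp (-(∑ k ∈ (F.erase j).filter (fun k => r j ≤ r k), a k) / 2)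
        = (∑ j ∈ F', a j * Real.exp (-(∑ k ∈ (F.erase j).filter (fun k => r j ≤ r k), a k) / 2))
          + a j₀ * Real.exp (-(∑ k ∈ F', a k) / 2) := by
      rw [← Finset.sum_erase_add F _ hj₀F, ← hF', hfilter]
    rw [hsplit]
    have hS : ∑ j ∈ F, a j = (∑ j ∈ F', a j) + a j₀ := by
      rw [← Finset.sum_erase_add F a hj₀F, ← hF']
    rw [hS]
    have hbound : (∑ j ∈ F', a j * Real.exp (-(∑ k ∈ (F.erase j).filter (fun k => r j ≤ r k), a k) / 2))
        ≤ 2 * Real.exp 2 * (1 - Real.exp (-(∑ j ∈ F', a j) / 2)) :=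
      le_trans (Finset.sum_le_sum hterm) hIH
    set S' := ∑ j ∈ F', a j with hS'def
    have hcore := csim_exp_core (h0 j₀ hj₀F) (h4 j₀ hj₀F)
    have hE : Real.exp (-(S' + a j₀) / 2) = Real.exp (-S' / 2) * Real.exp (-a j₀ / 2) := by
      rw [← Real.exp_add]; congr 1; ring
    have h5 : 0 < Real.exp (-S' / 2) := Real.exp_pos _
    rw [hE]
    nlinarith [hbound, hcore, h5, mul_le_mul_of_nonneg_right hcore (le_of_lt h5)]

/-- Carleson row-sum estimate. -/
private lemma csim_carleson_row (lam : ℕ → ℂ) (hdisc : ∀ n : ℕ, ‖lam n‖ < 1)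
    (hinj : Function.Injective lam) {δ : ℝ} (hδ : 0 < δ)
    (F : Finset ℕ) (j : ℕ)
    (hprod : δ ≤ ∏ k ∈ F.erase j, ‖lam k - lam j‖ / ‖1 - (starRingEnd ℂ) (lam k) * lam j‖) :
    ∑ k ∈ F.erase j,
        (1 - Complex.normSq (lam k)) * (1 - Complex.normSq (lam j))
          / Complex.normSq (1 - (starRingEnd ℂ) (lam k) * lam j)
      ≤ 2 * Real.log δ⁻¹ := by
  set p : ℕ → ℝ := fun k => ‖lam k - lam j‖ / ‖1 - (starRingEnd ℂ) (lam k) * lam j‖ with hp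
  have hwlt : ∀ k, ‖(starRingEnd ℂ) (lam k) * lam j‖ < 1 := by
    intro k
    rw [norm_mul, RCLike.norm_conj]
    calc ‖lam k‖ * ‖lam j‖ ≤ 1 * ‖lam j‖ := by
          apply mul_le_mul_of_nonneg_right (le_of_lt (hdisc k)) (norm_nonneg _)
      _ = ‖lam j‖ := one_mul _
      _ < 1 := hdisc j
  have hdpos : ∀ k, 0 < ‖1 - (starRingEnd ℂ) (lam k) * lam j‖ := fun k =>
    norm_pos_iff.2 (csim_one_sub_ne (hwlt k))
  have hppos : ∀ k ∈ F.erase j, 0 < p k := by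
    intro k hk
    apply div_pos _ (hdpos k)
    rw [norm_pos_iff, sub_ne_zero]
    exact fun h => (Finset.mem_erase.1 hk).1 (hinj h)
  -- s k = 1 - p k ^ 2
  have hsk : ∀ k, (1 - Complex.normSq (lam k)) * (1 - Complex.normSq (lam j))
      / Complex.normSq (1 - (starRingEnd ℂ) (lam k) * lam j) = 1 - p k ^ 2 := by
    intro k
    have hq : 0 < Complex.normSq (1 - (starRingEnd ℂ) (lam k) * lam j) :=
      csim_normSq_pos (hwlt k)
    have hid := csim_normSq_identity (lam k) (lam j)
    have hnum : Complex.normSq (lam j - lam k) = Complex.normSq (lam k - lam j) := by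
      rw [← Complex.normSq_neg]; ring_nf
    have hp2 : p k ^ 2 = Complex.normSq (lam k - lam j)
        / Complex.normSq (1 - (starRingEnd ℂ) (lam k) * lam j) := by
      rw [hp]
      simp only [div_pow]
      rw [Complex.sq_norm, Complex.sq_norm]
    rw [hp2, ← hid, hnum]
    field_simp
  have hsk_le : ∀ k ∈ F.erase j, 1 - p k ^ 2 ≤ 2 * Real.log (p k)⁻¹ := by
    intro k hk
    have hpk := hppos k hk
    have h1 : Real.log (p k ^ 2) ≤ p k ^ 2 - 1 :=
      Real.log_le_sub_one_of_pos (by positivity)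
    have h2 : Real.log (p k ^ 2) = 2 * Real.log (p k) := by
      rw [Real.log_pow]; push_cast; ring
    have h3 : Real.log (p k)⁻¹ = -Real.log (p k) := Real.log_inv _
    linarith
  calc ∑ k ∈ F.erase j, (1 - Complex.normSq (lam k)) * (1 - Complex.normSq (lam j))
          / Complex.normSq (1 - (starRingEnd ℂ) (lam k) * lam j)
      = ∑ k ∈ F.erase j, (1 - p k ^ 2) := Finset.sum_congr rfl fun k _ => hsk k
    _ ≤ ∑ k ∈ F.erase j, 2 * Real.log (p k)⁻¹ := Finset.sum_le_sum hsk_le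
    _ = 2 * (-(∑ k ∈ F.erase j, Real.log (p k))) := by
        simp only [Real.log_inv, mul_neg]
        rw [Finset.sum_neg_distrib, Finset.mul_sum]
    _ = 2 * (-Real.log (∏ k ∈ F.erase j, p k)) := by
        rw [Real.log_prod (fun k hk => ne_of_gt (hppos k hk))]
    _ ≤ 2 * Real.log δ⁻¹ := by
        have hlog : Real.log δ ≤ Real.log (∏ k ∈ F.erase j, p k) :=
          Real.log_le_log hδ hprod
        rw [Real.log_inv]
        linarith

/-! ### The Jones interpolating functions -/

private lemma csim_normSq_lt_one {lam : ℕ → ℂ} (hdisc : ∀ n : ℕ, ‖lam n‖ < 1) (n : ℕ) :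
    Complex.normSq (lam n) < 1 := by
  rw [Complex.normSq_eq_norm_sq]
  nlinarith [norm_nonneg (lam n), hdisc n]

private lemma csim_norm_sq_eq_normSq (w : ℂ) : ‖w‖ ^ 2 = Complex.normSq w := by
  rw [Complex.normSq_eq_norm_sq]

private lemma csim_prod_lt {lam : ℕ → ℂ} (hdisc : ∀ n : ℕ, ‖lam n‖ < 1) (k : ℕ) {w : ℂ}
    (hw : ‖w‖ ≤ 1) : ‖(starRingEnd ℂ) (lam k) * w‖ < 1 := by
  rw [norm_mul, RCLike.norm_conj]
  calc ‖lam k‖ * ‖w‖ ≤ ‖lam k‖ * 1 := mul_le_mul_of_nonneg_left hw (norm_nonneg _)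
    _ < 1 := by rw [mul_one]; exact hdisc k

private def csimBl (lam : ℕ → ℂ) (j k : ℕ) (z : ℂ) : ℂ :=
  ((z - lam k) / (1 - (starRingEnd ℂ) (lam k) * z)) *
    ((1 - (starRingEnd ℂ) (lam k) * lam j) / (lam j - lam k))

private def csimExpTerm (lam : ℕ → ℂ) (j k : ℕ) (z : ℂ) : ℂ :=
  ((1 - Complex.normSq (lam k) : ℝ) : ℂ) / (1 - (starRingEnd ℂ) (lam k) * z)
    - ((1 - Complex.normSq (lam k) : ℝ) : ℂ) / (1 - (starRingEnd ℂ) (lam k) * lam j)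

private def csimK (lam : ℕ → ℂ) (F : Finset ℕ) (j : ℕ) : Finset ℕ :=
  (F.erase j).filter fun k => ‖lam j‖ ≤ ‖lam k‖

private def csimJones (lam : ℕ → ℂ) (F : Finset ℕ) (j : ℕ) (z : ℂ) : ℂ :=
  (∏ k ∈ F.erase j, csimBl lam j k z) *
    (((1 - Complex.normSq (lam j) : ℝ) : ℂ) / (1 - (starRingEnd ℂ) (lam j) * z)) ^ 2 *
    Complex.exp (-∑ k ∈ csimK lam F j, csimExpTerm lam j k z)

private lemma csimJones_other (lam : ℕ → ℂ) (F : Finset ℕ) (i j : ℕ) (hi : i ∈ F)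
    (hij : i ≠ j) : csimJones lam F j (lam i) = 0 := by
  unfold csimJones
  rw [Finset.prod_eq_zero (Finset.mem_erase.2 ⟨hij, hi⟩)]
  · simp
  · unfold csimBl; simp

private lemma csimJones_self (lam : ℕ → ℂ) (hdisc : ∀ n : ℕ, ‖lam n‖ < 1)
    (hinj : Function.Injective lam) (F : Finset ℕ) (j : ℕ) :
    csimJones lam F j (lam j) = 1 := by
  unfold csimJones
  have h1 : ∀ k ∈ F.erase j, csimBl lam j k (lam j) = 1 := by
    intro k hk
    unfold csimBl
    have hnum : lam j - lam k ≠ 0 :=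
      sub_ne_zero.2 fun h => (Finset.mem_erase.1 hk).1 (hinj h.symm)
    have hden : (1 : ℂ) - (starRingEnd ℂ) (lam k) * lam j ≠ 0 :=
      csim_one_sub_ne (csim_prod_lt hdisc k (le_of_lt (hdisc j)))
    field_simp
    exact div_self (by rw [mul_comm]; exact hden)
  rw [Finset.prod_congr rfl h1, Finset.prod_const_one]
  have h2 : (1 : ℂ) - (starRingEnd ℂ) (lam j) * lam j
      = ((1 - Complex.normSq (lam j) : ℝ) : ℂ) := by
    rw [mul_comm, Complex.mul_conj]; push_cast; ring
  rw [h2]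
  have h3 : ((1 - Complex.normSq (lam j) : ℝ) : ℂ) ≠ 0 := by
    rw [Complex.ofReal_ne_zero]
    have := csim_normSq_lt_one hdisc j
    linarith
  rw [div_self h3, one_pow]
  have h4 : ∀ k ∈ csimK lam F j, csimExpTerm lam j k (lam j) = 0 := by
    intro k _; unfold csimExpTerm; ring
  rw [Finset.sum_congr rfl h4, Finset.sum_const_zero, neg_zero, Complex.exp_zero]
  ring

/-- The key pointwise bound on the unit circle. -/
private lemma csimJones_sum_bound (lam : ℕ → ℂ) (hdisc : ∀ n : ℕ, ‖lam n‖ < 1)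
    (hinj : Function.Injective lam) {δ : ℝ} (hδ : 0 < δ)
    (hCar : ∀ (n : ℕ) (F : Finset ℕ), n ∉ F →
      δ ≤ ∏ k ∈ F, ‖lam k - lam n‖ / ‖1 - (starRingEnd ℂ) (lam k) * lam n‖)
    (F : Finset ℕ) {z : ℂ} (hz : ‖z‖ = 1) :
    ∑ j ∈ F, ‖csimJones lam F j z‖ ≤ δ⁻¹ ^ 3 * (2 * Real.exp 2) := by
  have hnsq : ∀ n, Complex.normSq (lam n) < 1 := csim_normSq_lt_one hdisc
  have hnsq0 : ∀ n, 0 ≤ Complex.normSq (lam n) := fun n => Complex.normSq_nonneg _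
  have hzlt : ∀ k, ‖(starRingEnd ℂ) (lam k) * z‖ < 1 := fun k =>
    csim_prod_lt hdisc k (le_of_eq hz)
  have hqz : ∀ k, 0 < Complex.normSq (1 - (starRingEnd ℂ) (lam k) * z) := fun k =>
    csim_normSq_pos (hzlt k)
  have hnormz : ∀ k, ‖(starRingEnd ℂ) (lam k) * z‖ = ‖lam k‖ := by
    intro k; rw [norm_mul, RCLike.norm_conj, hz, mul_one]
  have hnsqz : ∀ k, Complex.normSq ((starRingEnd ℂ) (lam k) * z) = Complex.normSq (lam k) := by
    intro k
    rw [← csim_norm_sq_eq_normSq, hnormz, csim_norm_sq_eq_normSq]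
  set tsq : ℕ → ℝ := fun k =>
    (1 - Complex.normSq (lam k)) ^ 2 / Complex.normSq (1 - (starRingEnd ℂ) (lam k) * z)
    with htsq
  have htsq0 : ∀ k, 0 ≤ tsq k := fun k => div_nonneg (sq_nonneg _) (le_of_lt (hqz k))
  have htsq4 : ∀ k, tsq k ≤ 4 := by
    intro k
    rw [htsq]
    rw [div_le_iff₀ (hqz k)]
    have h1 : 1 - ‖lam k‖ ≤ ‖1 - (starRingEnd ℂ) (lam k) * z‖ := by
      have := norm_sub_norm_le (1 : ℂ) ((starRingEnd ℂ) (lam k) * z)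
      rw [hnormz k, norm_one] at this
      exact this
    have h2 : (1 - ‖lam k‖) ^ 2 ≤ Complex.normSq (1 - (starRingEnd ℂ) (lam k) * z) := by
      rw [← csim_norm_sq_eq_normSq]
      have h3 : 0 ≤ 1 - ‖lam k‖ := by linarith [hdisc k]
      nlinarith [h1]
    have h4 : Complex.normSq (lam k) = ‖lam k‖ ^ 2 := (csim_norm_sq_eq_normSq _).symm
    have h6 : (1 + ‖lam k‖) ^ 2 ≤ 4 := by nlinarith [hdisc k, norm_nonneg (lam k)]
    have h7 : (1 - Complex.normSq (lam k)) ^ 2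
        = (1 - ‖lam k‖) ^ 2 * (1 + ‖lam k‖) ^ 2 := by rw [h4]; ring
    rw [h7]
    nlinarith [mul_le_mul_of_nonneg_left h6 (sq_nonneg (1 - ‖lam k‖)), h2]
  -- the individual bound
  have hjb : ∀ j ∈ F, ‖csimJones lam F j z‖
      ≤ δ⁻¹ ^ 3 * (tsq j * Real.exp (-(∑ k ∈ csimK lam F j, tsq k) / 2)) := by
    intro j hj
    have hδj := hCar j (F.erase j) (Finset.notMem_erase j F)
    -- Blaschke product bound
    have hA : ‖∏ k ∈ F.erase j, csimBl lam j k z‖ ≤ δ⁻¹ := by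
      rw [norm_prod]
      have heach : ∀ k ∈ F.erase j, ‖csimBl lam j k z‖
          = (‖lam k - lam j‖ / ‖1 - (starRingEnd ℂ) (lam k) * lam j‖)⁻¹ := by
        intro k hk
        unfold csimBl
        rw [norm_mul, norm_div, norm_div, csim_norm_one_sub_conj_mul (lam k) hz, norm_sub_rev (lam j)]
        have h5 : ‖z - lam k‖ ≠ 0 ∨ True := Or.inr trivial
        rcases eq_or_ne (z - lam k) 0 with h6 | h6
        · -- impossible: ‖z‖ = 1 but ‖lam k‖ < 1
          exfalso
          have : z = lam k := by linear_combination h6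
          rw [this] at hz
          exact absurd hz (ne_of_lt (hdisc k))
        · rw [div_self (norm_ne_zero_iff.2 h6), one_mul, inv_div]
      rw [Finset.prod_congr rfl heach, Finset.prod_inv_distrib]
      exact inv_anti₀ hδ hδj
    -- kernel factor
    have hcj : (0:ℝ) < 1 - Complex.normSq (lam j) := by linarith [hnsq j]
    have hB : ‖(((1 - Complex.normSq (lam j) : ℝ) : ℂ)
        / (1 - (starRingEnd ℂ) (lam j) * z)) ^ 2‖ = tsq j := by
      rw [norm_pow, norm_div, Complex.norm_real, Real.norm_of_nonneg (le_of_lt hcj),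
        div_pow, htsq, csim_norm_sq_eq_normSq]
    -- exponential factor
    have hC : ‖Complex.exp (-∑ k ∈ csimK lam F j, csimExpTerm lam j k z)‖
        ≤ Real.exp (-(∑ k ∈ csimK lam F j, tsq k) / 2) * δ⁻¹ ^ 2 := by
      rw [Complex.norm_exp]
      have hre : ∀ k ∈ csimK lam F j, tsq k / 2
          - (1 - Complex.normSq (lam k)) * (1 - Complex.normSq (lam j))
            / Complex.normSq (1 - (starRingEnd ℂ) (lam k) * lam j)
          ≤ (csimExpTerm lam j k z).re := by
        intro k hk
        have hkK := Finset.mem_filter.1 hk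
        have hjk : Complex.normSq (lam j) ≤ Complex.normSq (lam k) := by
          rw [← csim_norm_sq_eq_normSq, ← csim_norm_sq_eq_normSq]
          have := hkK.2
          nlinarith [norm_nonneg (lam j), norm_nonneg (lam k)]
        have hwj : ‖(starRingEnd ℂ) (lam k) * lam j‖ < 1 :=
          csim_prod_lt hdisc k (le_of_lt (hdisc j))
        have hqj : 0 < Complex.normSq (1 - (starRingEnd ℂ) (lam k) * lam j) :=
          csim_normSq_pos hwj
        unfold csimExpTerm
        rw [Complex.sub_re, csim_re_c_div_eq _ (hzlt k), csim_re_c_div_eq _ hwj]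
        rw [hnsqz k]
        have hnsqkj : Complex.normSq ((starRingEnd ℂ) (lam k) * lam j)
            = Complex.normSq (lam k) * Complex.normSq (lam j) := by
          rw [Complex.normSq_mul, Complex.normSq_conj]
        rw [hnsqkj]
        have hck : (0:ℝ) < 1 - Complex.normSq (lam k) := by linarith [hnsq k]
        have hgoal1 : tsq k / 2 = (1 - Complex.normSq (lam k)) * (1 - Complex.normSq (lam k))
            / (2 * Complex.normSq (1 - (starRingEnd ℂ) (lam k) * z)) := by
          rw [htsq]; field_simp
        have hineq : (1 - Complex.normSq (lam k)) * (1 - Complex.normSq (lam k) * Complex.normSq (lam j))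
            / (2 * Complex.normSq (1 - (starRingEnd ℂ) (lam k) * lam j))
            ≤ (1 - Complex.normSq (lam k)) * (1 - Complex.normSq (lam j))
              / Complex.normSq (1 - (starRingEnd ℂ) (lam k) * lam j) := by
          rw [div_le_div_iff₀ (by positivity) hqj]
          have hkey : (1 - Complex.normSq (lam k) * Complex.normSq (lam j))
              ≤ 2 * (1 - Complex.normSq (lam j)) := by
            nlinarith [hnsq0 j, hnsq0 k, hnsq k, hjk]
          nlinarith [hqj, mul_le_mul_of_nonneg_left hkey (le_of_lt hck)]
        rw [hgoal1]
        linarith [hineq]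
      -- sum the real parts
      have hSre : (∑ k ∈ csimK lam F j, csimExpTerm lam j k z).re
          = ∑ k ∈ csimK lam F j, (csimExpTerm lam j k z).re := Complex.re_sum _ _
      have hrow : ∑ k ∈ csimK lam F j,
          (1 - Complex.normSq (lam k)) * (1 - Complex.normSq (lam j))
            / Complex.normSq (1 - (starRingEnd ℂ) (lam k) * lam j) ≤ 2 * Real.log δ⁻¹ := by
        apply le_trans _ (csim_carleson_row lam hdisc hinj hδ F j hδj)
        apply Finset.sum_le_sum_of_subset_of_nonneg (Finset.filter_subset _ _)
        intro i hi _
        have hwi : ‖(starRingEnd ℂ) (lam i) * lam j‖ < 1 :=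
          csim_prod_lt hdisc i (le_of_lt (hdisc j))
        have := csim_normSq_pos hwi
        have h7 : (0:ℝ) < 1 - Complex.normSq (lam i) := by linarith [hnsq i]
        have h8 : (0:ℝ) < 1 - Complex.normSq (lam j) := by linarith [hnsq j]
        positivity
      have hlow : (∑ k ∈ csimK lam F j, tsq k) / 2 - 2 * Real.log δ⁻¹
          ≤ (∑ k ∈ csimK lam F j, csimExpTerm lam j k z).re := by
        rw [hSre, Finset.sum_div]
        have h := Finset.sum_le_sum hre
        rw [Finset.sum_sub_distrib] at h
        linarith [h, hrow]
      rw [Complex.neg_re]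
      have hmono : -(∑ k ∈ csimK lam F j, csimExpTerm lam j k z).re
          ≤ -(∑ k ∈ csimK lam F j, tsq k) / 2 + 2 * Real.log δ⁻¹ := by linarith [hlow]
      calc Real.exp (-(∑ k ∈ csimK lam F j, csimExpTerm lam j k z).re)
          ≤ Real.exp (-(∑ k ∈ csimK lam F j, tsq k) / 2 + 2 * Real.log δ⁻¹) :=
            Real.exp_le_exp.2 hmono
        _ = Real.exp (-(∑ k ∈ csimK lam F j, tsq k) / 2) * δ⁻¹ ^ 2 := by
            rw [Real.exp_add]
            congr 1
            have hδinv : (0:ℝ) < δ⁻¹ := inv_pos.2 hδ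
            rw [show (2:ℝ) * Real.log δ⁻¹ = Real.log (δ⁻¹ ^ 2) by
              rw [Real.log_pow]; push_cast; ring]
            exact Real.exp_log (by positivity)
    -- assemble
    unfold csimJones
    rw [norm_mul, norm_mul, hB]
    have h9 : 0 ≤ tsq j := htsq0 j
    have h10 : (0:ℝ) ≤ δ⁻¹ := le_of_lt (inv_pos.2 hδ)
    calc ‖∏ k ∈ F.erase j, csimBl lam j k z‖ * tsq j
          * ‖Complex.exp (-∑ k ∈ csimK lam F j, csimExpTerm lam j k z)‖
        ≤ (δ⁻¹ * tsq j) * (Real.exp (-(∑ k ∈ csimK lam F j, tsq k) / 2) * δ⁻¹ ^ 2) := by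
          apply mul_le_mul (mul_le_mul_of_nonneg_right hA h9) hC (norm_nonneg _) (by positivity)
      _ = δ⁻¹ ^ 3 * (tsq j * Real.exp (-(∑ k ∈ csimK lam F j, tsq k) / 2)) := by ring
  -- sum over j
  calc ∑ j ∈ F, ‖csimJones lam F j z‖
      ≤ ∑ j ∈ F, δ⁻¹ ^ 3 * (tsq j * Real.exp (-(∑ k ∈ csimK lam F j, tsq k) / 2)) :=
        Finset.sum_le_sum hjb
    _ = δ⁻¹ ^ 3 * ∑ j ∈ F, tsq j * Real.exp (-(∑ k ∈ csimK lam F j, tsq k) / 2) := by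
        rw [Finset.mul_sum]
    _ ≤ δ⁻¹ ^ 3 * (2 * Real.exp 2) := by
        apply mul_le_mul_of_nonneg_left _ (by positivity)
        have hmain := csim_sum_exp_bound (fun k => ‖lam k‖) tsq F
          (fun j _ => htsq0 j) (fun j _ => htsq4 j)
        have hKeq : ∀ j, csimK lam F j = (F.erase j).filter (fun k => ‖lam j‖ ≤ ‖lam k‖) :=
          fun j => rfl
        simp only [hKeq]
        have hexp1 : Real.exp (-(∑ j ∈ F, tsq j) / 2) ≥ 0 := le_of_lt (Real.exp_pos _)
        calc ∑ j ∈ F, tsq j * Real.exp (-(∑ k ∈ (F.erase j).filter (fun k => ‖lam j‖ ≤ ‖lam k‖), tsq k) / 2)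
            ≤ 2 * Real.exp 2 * (1 - Real.exp (-(∑ j ∈ F, tsq j) / 2)) := hmain
          _ ≤ 2 * Real.exp 2 := by nlinarith [Real.exp_pos (2:ℝ), hexp1]

/-! ### Holomorphy and the interpolating operator -/

private lemma csim_diff (lam : ℕ → ℂ) (F : Finset ℕ) (w : ℕ → ℂ) {R : ℝ}
    (hR : ∀ k ∈ F, ∀ z ∈ Metric.closedBall (0:ℂ) R,
      (1 : ℂ) - (starRingEnd ℂ) (lam k) * z ≠ 0) :
    DifferentiableOn ℂ (fun z => ∑ j ∈ F, w j * csimJones lam F j z)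
      (Metric.closedBall (0:ℂ) R) := by
  apply DifferentiableOn.fun_sum
  intro j hj
  apply DifferentiableOn.const_mul
  unfold csimJones
  apply DifferentiableOn.fun_mul
  apply DifferentiableOn.fun_mul
  · apply DifferentiableOn.fun_finsetProd
    intro k hk
    unfold csimBl
    apply DifferentiableOn.fun_mul _ (differentiableOn_const _)
    apply DifferentiableOn.fun_div
    · exact differentiableOn_id.sub (differentiableOn_const _)
    · exact (differentiableOn_const _).sub ((differentiableOn_const _).mul differentiableOn_id)
    · exact hR k (Finset.mem_of_mem_erase hk)
  · apply DifferentiableOn.fun_pow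
    apply DifferentiableOn.fun_div (differentiableOn_const _)
    · exact (differentiableOn_const _).sub ((differentiableOn_const _).mul differentiableOn_id)
    · exact hR j hj
  · apply DifferentiableOn.cexp
    apply DifferentiableOn.fun_neg
    apply DifferentiableOn.fun_sum
    intro k hk
    have hkF : k ∈ F := Finset.mem_of_mem_erase (Finset.mem_filter.1 hk).1
    unfold csimExpTerm
    apply DifferentiableOn.fun_sub _ (differentiableOn_const _)
    apply DifferentiableOn.fun_div (differentiableOn_const _)
    · exact (differentiableOn_const _).sub ((differentiableOn_const _).mul differentiableOn_id)
    · exact hR k hkF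

set_option maxHeartbeats 1000000 in
/-- The key operator lemma: bounded interpolation of eigenvalue data. -/
private lemma csim_exists_interp
    {H : Type} [NormedAddCommGroup H] [InnerProductSpace ℂ H] [CompleteSpace H]
    (lam : ℕ → ℂ) (hinj : Function.Injective lam) (hdisc : ∀ n : ℕ, ‖lam n‖ < 1)
    {δ : ℝ} (hδ : 0 < δ)
    (hCar : ∀ (n : ℕ) (F : Finset ℕ), n ∉ F →
      δ ≤ ∏ k ∈ F, ‖lam k - lam n‖ / ‖1 - (starRingEnd ℂ) (lam k) * lam n‖)
    (x : ℕ → H) (T : H →L[ℂ] H) (hT : ∀ n : ℕ, T (x n) = lam n • x n)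
    {M : ℝ} (hM0 : 0 < M)
    (hM : ∀ p : Polynomial ℂ,
      ‖Polynomial.aeval T p‖ ≤ M * sSup ((fun z : ℂ => ‖p.eval z‖) '' {z : ℂ | ‖z‖ ≤ 1}))
    (F : Finset ℕ) (w : ℕ → ℂ) (hw : ∀ k ∈ F, ‖w k‖ ≤ 1) :
    ∃ U : H →L[ℂ] H, ‖U‖ ≤ M * (δ⁻¹ ^ 3 * (2 * Real.exp 2) + 1) ∧
      ∀ k ∈ F, U (x k) = w k • x k := by
  have hδinv : (0:ℝ) < δ⁻¹ := inv_pos.2 hδ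
  set C0 : ℝ := δ⁻¹ ^ 3 * (2 * Real.exp 2) with hC0def
  have hC0 : 0 < C0 := by positivity
  rcases F.eq_empty_or_nonempty with rfl | hne
  · exact ⟨0, by simp; positivity, by simp⟩
  -- radius bookkeeping
  set m' : ℝ := max (F.sup' hne fun k => ‖lam k‖) (1/2) with hm'def
  have hm'0 : (0:ℝ) < m' := lt_of_lt_of_le (by norm_num) (le_max_right _ _)
  have hm'1 : m' < 1 := by
    apply max_lt _ (by norm_num)
    exact Finset.sup'_lt_iff hne |>.2 fun k _ => hdisc k
  have hm'le : ∀ k ∈ F, ‖lam k‖ ≤ m' :=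
    fun k hk => le_trans (Finset.le_sup' (fun k => ‖lam k‖) hk) (le_max_left _ _)
  have hm'inv : 1 < m'⁻¹ := by
    have h := mul_inv_cancel₀ (ne_of_gt hm'0)
    nlinarith [inv_pos.2 hm'0]
  set R0 : ℝ := (1 + m'⁻¹) / 2 with hR0def
  have h1R : 1 < R0 := by rw [hR0def]; linarith
  have hmR : m' * R0 < 1 := by
    have h := mul_inv_cancel₀ (ne_of_gt hm'0)
    rw [hR0def]; nlinarith
  have hden : ∀ k ∈ F, ∀ z ∈ Metric.closedBall (0:ℂ) R0,
      (1 : ℂ) - (starRingEnd ℂ) (lam k) * z ≠ 0 := by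
    intro k hk z hzm
    apply csim_one_sub_ne
    rw [norm_mul, RCLike.norm_conj]
    calc ‖lam k‖ * ‖z‖ ≤ m' * R0 := by
          apply mul_le_mul (hm'le k hk) (mem_closedBall_zero_iff.1 hzm) (norm_nonneg _)
            (le_of_lt hm'0)
      _ < 1 := hmR
  -- the interpolating function
  set g : ℂ → ℂ := fun z => ∑ j ∈ F, w j * csimJones lam F j z with hgdef
  have hgdiff : DifferentiableOn ℂ g (Metric.closedBall (0:ℂ) R0) := csim_diff lam F w hden
  have hsubR : Metric.closedBall (0:ℂ) 1 ⊆ Metric.closedBall (0:ℂ) R0 :=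
    Metric.closedBall_subset_closedBall (le_of_lt h1R)
  have hgcl : DiffContOnCl ℂ g (Metric.ball (0:ℂ) 1) := by
    refine ⟨hgdiff.mono (le_trans Metric.ball_subset_closedBall hsubR), ?_⟩
    rw [closure_ball (0:ℂ) one_ne_zero]
    exact (hgdiff.continuousOn).mono hsubR
  have hgb : ∀ z ∈ Metric.closedBall (0:ℂ) 1, ‖g z‖ ≤ C0 := by
    intro z hzm
    apply Complex.norm_le_of_forall_mem_frontier_norm_le Metric.isBounded_ball hgcl
    · intro ζ hζ
      rw [frontier_ball (0:ℂ) one_ne_zero, mem_sphere_zero_iff_norm] at hζ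
      calc ‖g ζ‖ ≤ ∑ j ∈ F, ‖w j * csimJones lam F j ζ‖ := norm_sum_le _ _
        _ ≤ ∑ j ∈ F, ‖csimJones lam F j ζ‖ := by
            apply Finset.sum_le_sum
            intro j hj
            rw [norm_mul]
            calc ‖w j‖ * ‖csimJones lam F j ζ‖ ≤ 1 * ‖csimJones lam F j ζ‖ :=
                  mul_le_mul_of_nonneg_right (hw j hj) (norm_nonneg _)
              _ = ‖csimJones lam F j ζ‖ := one_mul _
        _ ≤ C0 := csimJones_sum_bound lam hdisc hinj hδ hCar F hζ
    · rwa [closure_ball (0:ℂ) one_ne_zero]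
  have hgval : ∀ i ∈ F, g (lam i) = w i := by
    intro i hi
    show ∑ j ∈ F, w j * csimJones lam F j (lam i) = w i
    rw [Finset.sum_eq_single i]
    · rw [csimJones_self lam hdisc hinj F i, mul_one]
    · intro j hj hji
      rw [csimJones_other lam F i j hi fun h => hji h.symm, mul_zero]
    · intro h; exact absurd hi h
  -- power series expansion
  have hR0nonneg : (0:ℝ) ≤ R0 := by linarith
  have hcoe : ((R0.toNNReal : ℝ≥0) : ℝ) = R0 := Real.coe_toNNReal _ hR0nonneg
  have hgdiff' : DifferentiableOn ℂ g (Metric.closedBall (0:ℂ) (R0.toNNReal : ℝ)) := by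
    rw [hcoe]; exact hgdiff
  have hps := hgdiff'.hasFPowerSeriesOnBall (Real.toNNReal_pos.2 (by linarith))
  set p := cauchyPowerSeries g 0 (R0.toNNReal : ℝ) with hpdef
  set r' : ℝ := (1 + R0) / 2 with hr'def
  have h1r' : 1 < r' := by rw [hr'def]; linarith
  have hr'R : r' < R0 := by rw [hr'def]; linarith
  have hr'coe : ((r'.toNNReal : ℝ≥0) : ℝ) = r' := Real.coe_toNNReal _ (by linarith)
  have hlt : ((r'.toNNReal : ℝ≥0) : ℝ≥0∞) < ((R0.toNNReal : ℝ≥0) : ℝ≥0∞) := by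
    rw [ENNReal.coe_lt_coe]
    exact (Real.toNNReal_lt_toNNReal_iff (by linarith)).2 hr'R
  have htu := hps.tendstoUniformlyOn hlt
  have htu0 : TendstoUniformlyOn (fun n y => p.partialSum n y) g Filter.atTop
      (Metric.ball (0:ℂ) (r'.toNNReal : ℝ)) := by
    have : (fun y : ℂ => g ((0:ℂ) + y)) = g := by funext y; rw [zero_add]
    rwa [this] at htu
  have hsub1 : Metric.closedBall (0:ℂ) 1 ⊆ Metric.ball (0:ℂ) (r'.toNNReal : ℝ) := by
    apply Metric.closedBall_subset_ball
    rw [hr'coe]; exact h1r'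
  have htum := Metric.tendstoUniformlyOn_iff.1 htu0
  -- approximating polynomials
  set poly : ℕ → Polynomial ℂ :=
    fun n => ∑ i ∈ Finset.range n, Polynomial.C (p.coeff i) * Polynomial.X ^ i with hpolydef
  have hpeval : ∀ (n : ℕ) (z : ℂ), (poly n).eval z = p.partialSum n z := by
    intro n z
    rw [hpolydef]
    unfold FormalMultilinearSeries.partialSum
    rw [Polynomial.eval_finset_sum]
    apply Finset.sum_congr rfl
    intro i _
    rw [FormalMultilinearSeries.apply_eq_pow_smul_coeff, smul_eq_mul]
    rw [Polynomial.eval_mul, Polynomial.eval_C, Polynomial.eval_pow, Polynomial.eval_X, mul_comm]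
  set A : ℕ → (H →L[ℂ] H) := fun n => Polynomial.aeval T (poly n) with hAdef
  have hsSup_le : ∀ (q : Polynomial ℂ) (c : ℝ), 0 ≤ c →
      (∀ z : ℂ, ‖z‖ ≤ 1 → ‖q.eval z‖ ≤ c) → ‖(Polynomial.aeval T) q‖ ≤ M * c := by
    intro q c hc hq
    refine le_trans (hM q) (mul_le_mul_of_nonneg_left ?_ (le_of_lt hM0))
    apply Real.sSup_le _ hc
    rintro v ⟨ζ, hζ, rfl⟩
    exact hq ζ hζ
  -- Cauchy sequence of operators
  have hCauchy : CauchySeq A := by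
    rw [Metric.cauchySeq_iff]
    intro ε hε
    have hε' : 0 < ε / (2 * M + 2) := by positivity
    obtain ⟨N, hN⟩ := Filter.eventually_atTop.1 (htum _ hε')
    refine ⟨N, fun a ha b hb => ?_⟩
    rw [dist_eq_norm]
    have hab : A a - A b = Polynomial.aeval T (poly a - poly b) := by
      rw [map_sub]
    rw [hab]
    have hbound : ∀ z : ℂ, ‖z‖ ≤ 1 → ‖(poly a - poly b).eval z‖ ≤ 2 * (ε / (2 * M + 2)) := by
      intro z hz1
      have hzm : z ∈ Metric.ball (0:ℂ) (r'.toNNReal : ℝ) :=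
        hsub1 (mem_closedBall_zero_iff.2 hz1)
      have ha' := hN a ha z hzm
      have hb' := hN b hb z hzm
      rw [dist_eq_norm] at ha' hb'
      rw [Polynomial.eval_sub, hpeval, hpeval]
      calc ‖p.partialSum a z - p.partialSum b z‖
          ≤ ‖g z - p.partialSum a z‖ + ‖g z - p.partialSum b z‖ := by
            have := norm_sub_le (g z - p.partialSum b z) (g z - p.partialSum a z)
            have heq : g z - p.partialSum b z - (g z - p.partialSum a z)
                = p.partialSum a z - p.partialSum b z := by ring
            rw [heq] at this
            linarith
        _ ≤ 2 * (ε / (2 * M + 2)) := by linarith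
    calc ‖(Polynomial.aeval T) (poly a - poly b)‖ ≤ M * (2 * (ε / (2 * M + 2))) :=
          hsSup_le _ _ (by positivity) hbound
      _ < ε := by
          rw [div_eq_mul_inv]
          have h2 : (0:ℝ) < 2 * M + 2 := by linarith
          have h3 := mul_inv_cancel₀ (ne_of_gt h2)
          have h4 : ε * ((2 * M + 2) * (2 * M + 2)⁻¹) = ε := by rw [h3, mul_one]
          nlinarith [h4, mul_pos hε (inv_pos.2 h2)]
  obtain ⟨U, hU⟩ := cauchySeq_tendsto_of_complete hCauchy
  -- eigenvector action of polynomials of T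
  have hTn : ∀ (n : ℕ) (k : ℕ), (T ^ n) (x k) = (lam k) ^ n • x k := by
    intro n k
    induction n with
    | zero => simp
    | succ n ih =>
        rw [pow_succ, ContinuousLinearMap.mul_apply, hT, map_smul, ih, smul_smul, ← pow_succ']
  have haev : ∀ (q : Polynomial ℂ) (k : ℕ),
      (Polynomial.aeval T q) (x k) = q.eval (lam k) • x k := by
    intro q k
    induction q using Polynomial.induction_on' with
    | add p q hp hq =>
        rw [map_add, ContinuousLinearMap.add_apply, hp, hq, Polynomial.eval_add, add_smul]
    | monomial n c =>
        rw [Polynomial.aeval_monomial, Polynomial.eval_monomial,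
          ContinuousLinearMap.mul_apply, hTn, Algebra.algebraMap_eq_smul_one,
          ContinuousLinearMap.smul_apply, ContinuousLinearMap.one_apply, smul_smul]
  -- conclusion
  refine ⟨U, ?_, ?_⟩
  · -- norm bound
    obtain ⟨N, hN⟩ := Filter.eventually_atTop.1 (htum 1 one_pos)
    have hev : ∀ᶠ n in Filter.atTop, ‖A n‖ ≤ M * (C0 + 1) := by
      rw [Filter.eventually_atTop]
      refine ⟨N, fun n hn => ?_⟩
      apply hsSup_le _ _ (by positivity)
      intro z hz1
      have hzm : z ∈ Metric.ball (0:ℂ) (r'.toNNReal : ℝ) :=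
        hsub1 (mem_closedBall_zero_iff.2 hz1)
      have h' := hN n hn z hzm
      rw [dist_eq_norm] at h'
      have hgz := hgb z (mem_closedBall_zero_iff.2 hz1)
      have : ‖(poly n).eval z‖ ≤ ‖g z‖ + ‖g z - p.partialSum n z‖ := by
        rw [hpeval]
        have := norm_sub_le (g z) (g z - p.partialSum n z)
        have heq : g z - (g z - p.partialSum n z) = p.partialSum n z := by ring
        rw [heq] at this
        linarith
      linarith
    exact le_of_tendsto hU.norm hev
  · -- eigenvector action
    intro k hk
    have tendsto1 : Filter.Tendsto (fun n => (A n) (x k)) Filter.atTop (nhds (U (x k))) := by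
      have hcont : Continuous fun Φ : H →L[ℂ] H => Φ (x k) :=
        (ContinuousLinearMap.apply ℂ H (x k)).continuous
      exact (hcont.tendsto U).comp hU
    have tendsto2 : Filter.Tendsto (fun n => (A n) (x k)) Filter.atTop
        (nhds (g (lam k) • x k)) := by
      have heq : (fun n => (A n) (x k)) = fun n => (poly n).eval (lam k) • x k := by
        funext n; exact haev (poly n) k
      rw [heq]
      have hmem : lam k ∈ Metric.ball (0:ℂ) (r'.toNNReal : ℝ) := by
        rw [mem_ball_zero_iff, hr'coe]
        exact lt_trans (hdisc k) h1r'
      have hval := htu0.tendsto_at hmem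
      have heq2 : (fun n => (poly n).eval (lam k)) = fun n => p.partialSum n (lam k) := by
        funext n; exact hpeval n (lam k)
      have hval' : Filter.Tendsto (fun n => (poly n).eval (lam k)) Filter.atTop
          (nhds (g (lam k))) := by rw [heq2]; exact hval
      exact hval'.smul_const (x k)
    have hEq := tendsto_nhds_unique tendsto1 tendsto2
    rw [hEq, hgval k hk]

/-! ### Sign averaging in Hilbert space -/

private lemma csim_sign_average {H : Type} [NormedAddCommGroup H] [InnerProductSpace ℂ H]
    (F : Finset ℕ) (u : ℕ → H) :
    ∑ S ∈ F.powerset, ‖∑ k ∈ F, (if k ∈ S then (-1:ℂ) else 1) • u k‖ ^ 2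
      = 2 ^ F.card * ∑ k ∈ F, ‖u k‖ ^ 2 := by
  induction F using Finset.induction_on with
  | empty => simp
  | @insert j F' hj ih =>
    have hdisj : Disjoint F'.powerset (Finset.image (insert j) F'.powerset) := by
      rw [Finset.disjoint_left]
      intro S hS hS'
      obtain ⟨tt, htt, rfl⟩ := Finset.mem_image.1 hS'
      exact hj (Finset.mem_powerset.1 hS (Finset.mem_insert_self j tt))
    have hinjimg : ∀ a ∈ F'.powerset, ∀ b ∈ F'.powerset, insert j a = insert j b → a = b := by
      intro a ha b hb h
      have hja : j ∉ a := fun h' => hj (Finset.mem_powerset.1 ha h')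
      have hjb : j ∉ b := fun h' => hj (Finset.mem_powerset.1 hb h')
      ext k
      constructor
      · intro hk
        have hkj : k ≠ j := fun he => hja (he ▸ hk)
        have : k ∈ insert j b := h ▸ (Finset.mem_insert_of_mem hk)
        rcases Finset.mem_insert.1 this with h' | h'
        · exact absurd h' hkj
        · exact h'
      · intro hk
        have hkj : k ≠ j := fun he => hjb (he ▸ hk)
        have : k ∈ insert j a := h.symm ▸ (Finset.mem_insert_of_mem hk)
        rcases Finset.mem_insert.1 this with h' | h'
        · exact absurd h' hkj
        · exact h'
    rw [Finset.powerset_insert, Finset.sum_union hdisj, Finset.sum_image hinjimg,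
      ← Finset.sum_add_distrib]
    have hterm : ∀ S ∈ F'.powerset,
        (‖∑ k ∈ insert j F', (if k ∈ S then (-1:ℂ) else 1) • u k‖ ^ 2
          + ‖∑ k ∈ insert j F', (if k ∈ insert j S then (-1:ℂ) else 1) • u k‖ ^ 2)
        = 2 * (‖∑ k ∈ F', (if k ∈ S then (-1:ℂ) else 1) • u k‖ ^ 2 + ‖u j‖ ^ 2) := by
      intro S hS
      have hjS : j ∉ S := fun h => hj (Finset.mem_powerset.1 hS h)
      rw [Finset.sum_insert hj, Finset.sum_insert hj, if_neg hjS,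
        if_pos (Finset.mem_insert_self j S), one_smul, neg_one_smul]
      have hcong : ∑ k ∈ F', (if k ∈ insert j S then (-1:ℂ) else 1) • u k
          = ∑ k ∈ F', (if k ∈ S then (-1:ℂ) else 1) • u k := by
        apply Finset.sum_congr rfl
        intro k hk
        have hkj : k ≠ j := fun h => hj (h ▸ hk)
        congr 1
        simp [Finset.mem_insert, hkj]
      rw [hcong]
      set wS := ∑ k ∈ F', (if k ∈ S then (-1:ℂ) else 1) • u k with hwS
      have hpar := parallelogram_law_with_norm ℂ wS (u j)
      have h1 : ‖u j + wS‖ = ‖wS + u j‖ := by rw [add_comm]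
      have h2 : ‖-u j + wS‖ = ‖wS - u j‖ := by rw [neg_add_eq_sub]
      rw [h1, h2, pow_two, pow_two, pow_two, pow_two]
      linarith [hpar]
    rw [Finset.sum_congr rfl hterm]
    have hconst : ∑ _S ∈ F'.powerset, (‖u j‖ ^ 2) = 2 ^ F'.card * ‖u j‖ ^ 2 := by
      rw [Finset.sum_const, Finset.card_powerset, nsmul_eq_mul]
      push_cast
      ring
    rw [← Finset.mul_sum, Finset.sum_add_distrib, hconst, ih,
      Finset.card_insert_of_notMem hj, Finset.sum_insert hj]
    push_cast
    ring

set_option maxHeartbeats 1000000 in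
/-- Proposition 4.2: a polynomially bounded operator with a spanning family of eigenvectors
whose (pairwise distinct) eigenvalues satisfy the Carleson condition is similar to the
diagonal operator with the same eigenvalues. -/
theorem similar_to_diagonal_of_carleson
    (lam : ℕ → ℂ) (hinj : Function.Injective lam) (hdisc : ∀ n : ℕ, ‖lam n‖ < 1)
    (hCar : CarlesonCondition lam)
    {H : Type} [NormedAddCommGroup H] [InnerProductSpace ℂ H] [CompleteSpace H]
    (x : ℕ → H) (hx : ∀ n : ℕ, x n ≠ 0)
    (hspan : (Submodule.span ℂ (Set.range x)).topologicalClosure = ⊤)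
    (T : H →L[ℂ] H) (hT : ∀ n : ℕ, T (x n) = lam n • x n)
    (D : lp (fun _ : ℕ => ℂ) 2 →L[ℂ] lp (fun _ : ℕ => ℂ) 2)
    (hD : ∀ (a : lp (fun _ : ℕ => ℂ) 2) (n : ℕ), D a n = lam n * a n)
    (hTpb : PolynomiallyBounded T) :
    ∃ X : H ≃L[ℂ] lp (fun _ : ℕ => ℂ) 2, ∀ v : H, X (T v) = D (X v) := by
  classical
  obtain ⟨δ, hδ, hCar'⟩ := hCar
  obtain ⟨M, hM0, hM⟩ := hTpb
  have hδinv : (0:ℝ) < δ⁻¹ := inv_pos.2 hδ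
  set C : ℝ := δ⁻¹ ^ 3 * (2 * Real.exp 2) + 1 with hCdef
  have hCpos : 0 < C := by positivity
  set K : ℝ := M * C with hKdef
  have hK : 0 < K := mul_pos hM0 hCpos
  have hUex : ∀ (F : Finset ℕ) (w : ℕ → ℂ), (∀ k ∈ F, ‖w k‖ ≤ 1) →
      ∃ U : H →L[ℂ] H, ‖U‖ ≤ K ∧ ∀ k ∈ F, U (x k) = w k • x k :=
    fun F w hw => csim_exists_interp lam hinj hdisc hδ hCar' x T hT hM0 hM F w hw
  -- normalized eigenvectors
  set t : ℕ → ℝ := fun n => ‖x n‖ with htdef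
  have ht0 : ∀ n, 0 < t n := fun n => norm_pos_iff.2 (hx n)
  set y : ℕ → H := fun n => (((t n : ℝ) : ℂ))⁻¹ • x n with hydef
  have hyn : ∀ n, ‖y n‖ = 1 := by
    intro n
    show ‖(((t n : ℝ) : ℂ))⁻¹ • x n‖ = 1
    rw [norm_smul, norm_inv, Complex.norm_real, Real.norm_of_nonneg (le_of_lt (ht0 n))]
    exact inv_mul_cancel₀ (ne_of_gt (ht0 n))
  have hTy : ∀ n, T (y n) = lam n • y n := by
    intro n
    show T ((((t n : ℝ) : ℂ))⁻¹ • x n) = lam n • (((t n : ℝ) : ℂ))⁻¹ • x n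
    rw [map_smul, hT, smul_comm]
  -- Riesz-basis inequalities on finite sums
  have hRiesz : ∀ (F : Finset ℕ) (c : ℕ → ℂ),
      (∑ k ∈ F, ‖c k‖ ^ 2 ≤ K ^ 2 * ‖∑ k ∈ F, c k • y k‖ ^ 2) ∧
      (‖∑ k ∈ F, c k • y k‖ ^ 2 ≤ K ^ 2 * ∑ k ∈ F, ‖c k‖ ^ 2) := by
    intro F c
    set v := ∑ k ∈ F, c k • y k with hvdef
    have hperS : ∀ S : Finset ℕ,
        ‖∑ k ∈ F, (if k ∈ S then (-1:ℂ) else 1) • (c k • y k)‖ ≤ K * ‖v‖ ∧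
        ‖v‖ ≤ K * ‖∑ k ∈ F, (if k ∈ S then (-1:ℂ) else 1) • (c k • y k)‖ := by
      intro S
      obtain ⟨U, hUn, hUx'⟩ := hUex F (fun k => if k ∈ S then (-1:ℂ) else 1)
        (fun k _ => by by_cases h : k ∈ S <;> simp [h])
      have hUy : ∀ k ∈ F, U (y k) = (if k ∈ S then (-1:ℂ) else 1) • y k := by
        intro k hk
        show U ((((t k : ℝ) : ℂ))⁻¹ • x k) = _
        rw [map_smul, hUx' k hk, smul_comm]
      have h1 : U v = ∑ k ∈ F, (if k ∈ S then (-1:ℂ) else 1) • (c k • y k) := by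
        rw [hvdef, map_sum]
        apply Finset.sum_congr rfl
        intro k hk
        rw [map_smul, hUy k hk, smul_comm]
      have h2 : U (∑ k ∈ F, (if k ∈ S then (-1:ℂ) else 1) • (c k • y k)) = v := by
        rw [map_sum, hvdef]
        apply Finset.sum_congr rfl
        intro k hk
        have hee : (((if k ∈ S then (-1:ℂ) else 1) * c k) * (if k ∈ S then (-1:ℂ) else 1))
            = c k := by
          by_cases h : k ∈ S
          · simp only [if_pos h]; ring
          · simp only [if_neg h]; ring
        rw [map_smul, map_smul, hUy k hk, smul_smul, smul_smul, hee]
      constructor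
      · rw [← h1]
        calc ‖U v‖ ≤ ‖U‖ * ‖v‖ := U.le_opNorm v
          _ ≤ K * ‖v‖ := mul_le_mul_of_nonneg_right hUn (norm_nonneg _)
      · conv_lhs => rw [← h2]
        calc ‖U _‖ ≤ ‖U‖ * ‖_‖ := U.le_opNorm _
          _ ≤ K * _ := mul_le_mul_of_nonneg_right hUn (norm_nonneg _)
    have havg := csim_sign_average F (fun k => c k • y k)
    have hnt : ∑ k ∈ F, ‖c k • y k‖ ^ 2 = ∑ k ∈ F, ‖c k‖ ^ 2 :=
      Finset.sum_congr rfl fun k _ => by rw [norm_smul, hyn, mul_one]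
    rw [hnt] at havg
    have hcardP : (F.powerset.card : ℝ) = 2 ^ F.card := by
      rw [Finset.card_powerset]; push_cast; ring
    have h2pos : (0:ℝ) < 2 ^ F.card := by positivity
    constructor
    · -- lower Riesz bound
      have hle : ∀ S ∈ F.powerset,
          ‖∑ k ∈ F, (if k ∈ S then (-1:ℂ) else 1) • (c k • y k)‖ ^ 2 ≤ K ^ 2 * ‖v‖ ^ 2 := by
        intro S _
        have h := (hperS S).1
        have h0 : (0:ℝ) ≤ ‖∑ k ∈ F, (if k ∈ S then (-1:ℂ) else 1) • (c k • y k)‖ :=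
          norm_nonneg _
        calc ‖∑ k ∈ F, (if k ∈ S then (-1:ℂ) else 1) • (c k • y k)‖ ^ 2
            ≤ (K * ‖v‖) ^ 2 := pow_le_pow_left₀ h0 h 2
          _ = K ^ 2 * ‖v‖ ^ 2 := by ring
      have hsum := Finset.sum_le_sum hle
      rw [havg, Finset.sum_const, nsmul_eq_mul, hcardP] at hsum
      have := le_of_mul_le_mul_left (by linarith : 2 ^ F.card * (∑ k ∈ F, ‖c k‖ ^ 2)
        ≤ 2 ^ F.card * (K ^ 2 * ‖v‖ ^ 2)) h2pos
      linarith
    · -- upper Riesz bound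
      have hle : ∀ S ∈ F.powerset, ‖v‖ ^ 2
          ≤ K ^ 2 * ‖∑ k ∈ F, (if k ∈ S then (-1:ℂ) else 1) • (c k • y k)‖ ^ 2 := by
        intro S _
        have h := (hperS S).2
        calc ‖v‖ ^ 2 ≤ (K * ‖∑ k ∈ F, (if k ∈ S then (-1:ℂ) else 1) • (c k • y k)‖) ^ 2 :=
              pow_le_pow_left₀ (norm_nonneg _) h 2
          _ = K ^ 2 * ‖∑ k ∈ F, (if k ∈ S then (-1:ℂ) else 1) • (c k • y k)‖ ^ 2 := by ring
      have hsum := Finset.sum_le_sum hle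
      rw [← Finset.mul_sum, havg, Finset.sum_const, nsmul_eq_mul, hcardP] at hsum
      have h' : 2 ^ F.card * ‖v‖ ^ 2 ≤ 2 ^ F.card * (K ^ 2 * ∑ k ∈ F, ‖c k‖ ^ 2) := by
        nlinarith [hsum]
      exact le_of_mul_le_mul_left h' h2pos
  -- square-root versions
  have hfin2 : ∀ (F : Finset ℕ) (c : ℕ → ℂ),
      ‖∑ k ∈ F, c k • y k‖ ≤ K * Real.sqrt (∑ k ∈ F, ‖c k‖ ^ 2) := by
    intro F c
    have hs0 : (0:ℝ) ≤ ∑ k ∈ F, ‖c k‖ ^ 2 := Finset.sum_nonneg fun k _ => sq_nonneg _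
    have h := (hRiesz F c).2
    have h2 : ‖∑ k ∈ F, c k • y k‖ ^ 2 ≤ (K * Real.sqrt (∑ k ∈ F, ‖c k‖ ^ 2)) ^ 2 := by
      rw [mul_pow, Real.sq_sqrt hs0]
      exact h
    have := Real.sqrt_le_sqrt h2
    rwa [Real.sqrt_sq (norm_nonneg _), Real.sqrt_sq (by positivity)] at this
  have hfin1 : ∀ (F : Finset ℕ) (c : ℕ → ℂ),
      Real.sqrt (∑ k ∈ F, ‖c k‖ ^ 2) ≤ K * ‖∑ k ∈ F, c k • y k‖ := by
    intro F c
    have h := (hRiesz F c).1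
    have h2 : (Real.sqrt (∑ k ∈ F, ‖c k‖ ^ 2)) ^ 2 ≤ (K * ‖∑ k ∈ F, c k • y k‖) ^ 2 := by
      rw [mul_pow, Real.sq_sqrt (Finset.sum_nonneg fun k _ => sq_nonneg _)]
      exact h
    have := Real.sqrt_le_sqrt h2
    rwa [Real.sqrt_sq (Real.sqrt_nonneg _), Real.sqrt_sq (by positivity)] at this
  -- ℓ² facts
  have htwo : (2 : ENNReal).toReal = 2 := by norm_num
  have hsummable2 : ∀ a : lp (fun _ : ℕ => ℂ) 2,
      Summable (fun k => ‖(a : ∀ _ : ℕ, ℂ) k‖ ^ 2) := by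
    intro a
    have h := (lp.memℓp a).summable (by rw [htwo]; norm_num)
    have hconv : (fun k => ‖(a : ∀ _ : ℕ, ℂ) k‖ ^ ((2:ENNReal).toReal))
        = fun k => ‖(a : ∀ _ : ℕ, ℂ) k‖ ^ 2 := by
      funext k
      rw [show ((2:ENNReal).toReal) = ((2:ℕ):ℝ) by norm_num, Real.rpow_natCast]
    rwa [hconv] at h
  have hnorm_a : ∀ a : lp (fun _ : ℕ => ℂ) 2,
      ‖a‖ = Real.sqrt (∑' k, ‖(a : ∀ _ : ℕ, ℂ) k‖ ^ 2) := by
    intro a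
    rw [lp.norm_eq_tsum_rpow (by rw [htwo]; norm_num) a]
    have hconv : (fun k => ‖(a : ∀ _ : ℕ, ℂ) k‖ ^ ((2:ENNReal).toReal))
        = fun k => ‖(a : ∀ _ : ℕ, ℂ) k‖ ^ 2 := by
      funext k
      rw [show ((2:ENNReal).toReal) = ((2:ℕ):ℝ) by norm_num, Real.rpow_natCast]
    rw [hconv, Real.sqrt_eq_rpow, htwo]
  have hpartial_le : ∀ (a : lp (fun _ : ℕ => ℂ) 2) (F : Finset ℕ),
      ∑ k ∈ F, ‖(a : ∀ _ : ℕ, ℂ) k‖ ^ 2 ≤ ∑' k, ‖(a : ∀ _ : ℕ, ℂ) k‖ ^ 2 :=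
    fun a F => (hsummable2 a).sum_le_tsum F (fun k _ => sq_nonneg _)
  -- summability of the vector series
  have hsummable_vec : ∀ a : lp (fun _ : ℕ => ℂ) 2,
      Summable (fun k => (a : ∀ _ : ℕ, ℂ) k • y k) := by
    intro a
    rw [summable_iff_vanishing]
    intro e he
    obtain ⟨ε, hε, hball⟩ := Metric.mem_nhds_iff.1 he
    have hεK : (0:ℝ) < (ε / (K + 1)) ^ 2 := by positivity
    obtain ⟨s, hs⟩ := (summable_iff_vanishing.1 (hsummable2 a))
      (Metric.ball (0:ℝ) ((ε / (K + 1)) ^ 2)) (Metric.ball_mem_nhds 0 hεK)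
    refine ⟨s, fun tt hdisj => ?_⟩
    apply hball
    rw [Metric.mem_ball, dist_zero_right]
    have h1 := hs tt hdisj
    rw [Metric.mem_ball, dist_zero_right, Real.norm_eq_abs] at h1
    have h2 : ∑ k ∈ tt, ‖(a : ∀ _ : ℕ, ℂ) k‖ ^ 2 < (ε / (K + 1)) ^ 2 :=
      lt_of_le_of_lt (le_abs_self _) h1
    have h3 := hfin2 tt (a : ∀ _ : ℕ, ℂ)
    have h4 : Real.sqrt (∑ k ∈ tt, ‖(a : ∀ _ : ℕ, ℂ) k‖ ^ 2) < ε / (K + 1) := by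
      have := Real.sqrt_lt_sqrt (Finset.sum_nonneg fun k _ => sq_nonneg _) h2
      rwa [Real.sqrt_sq (by positivity)] at this
    calc ‖∑ k ∈ tt, (a : ∀ _ : ℕ, ℂ) k • y k‖
        ≤ K * Real.sqrt (∑ k ∈ tt, ‖(a : ∀ _ : ℕ, ℂ) k‖ ^ 2) := h3
      _ < ε := by
          nlinarith [mul_lt_mul_of_pos_left h4 hK,
            div_mul_cancel₀ ε (show (K + 1 : ℝ) ≠ 0 by positivity),
            div_pos hε (show (0:ℝ) < K + 1 by linarith)]
  -- the comparison map
  set Φ₀ : lp (fun _ : ℕ => ℂ) 2 →ₗ[ℂ] H :=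
    { toFun := fun a => ∑' k, (a : ∀ _ : ℕ, ℂ) k • y k
      map_add' := by
        intro a b
        rw [← (hsummable_vec a).tsum_add (hsummable_vec b)]
        apply tsum_congr
        intro k
        have hco : ((a + b : lp (fun _ : ℕ => ℂ) 2) : ∀ _ : ℕ, ℂ) k
            = (a : ∀ _ : ℕ, ℂ) k + (b : ∀ _ : ℕ, ℂ) k := by
          rw [lp.coeFn_add]; rfl
        rw [hco, add_smul]
      map_smul' := by
        intro m a
        rw [RingHom.id_apply, ← (hsummable_vec a).tsum_const_smul m]
        apply tsum_congr
        intro k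
        have hco : ((m • a : lp (fun _ : ℕ => ℂ) 2) : ∀ _ : ℕ, ℂ) k
            = m * (a : ∀ _ : ℕ, ℂ) k := by
          rw [lp.coeFn_smul]; rfl
        rw [hco, ← smul_smul] } with hPhi0def
  have hΦ₀app : ∀ a, Φ₀ a = ∑' k, (a : ∀ _ : ℕ, ℂ) k • y k := fun a => rfl
  have hhs : ∀ a : lp (fun _ : ℕ => ℂ) 2,
      HasSum (fun k => (a : ∀ _ : ℕ, ℂ) k • y k) (Φ₀ a) := fun a => (hsummable_vec a).hasSum
  have hnormlim : ∀ a : lp (fun _ : ℕ => ℂ) 2,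
      Filter.Tendsto (fun F : Finset ℕ => ‖∑ k ∈ F, (a : ∀ _ : ℕ, ℂ) k • y k‖)
        Filter.atTop (nhds ‖Φ₀ a‖) := by
    intro a
    exact (Filter.Tendsto.comp (Continuous.tendsto continuous_norm _) (hhs a))
  have hΦub : ∀ a, ‖Φ₀ a‖ ≤ K * ‖a‖ := by
    intro a
    apply le_of_tendsto (hnormlim a)
    apply Filter.Eventually.of_forall
    intro F
    calc ‖∑ k ∈ F, (a : ∀ _ : ℕ, ℂ) k • y k‖
        ≤ K * Real.sqrt (∑ k ∈ F, ‖(a : ∀ _ : ℕ, ℂ) k‖ ^ 2) := hfin2 F _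
      _ ≤ K * ‖a‖ := by
          apply mul_le_mul_of_nonneg_left _ (le_of_lt hK)
          rw [hnorm_a a]
          exact Real.sqrt_le_sqrt (hpartial_le a F)
  have hΦlb : ∀ a, ‖a‖ ≤ K * ‖Φ₀ a‖ := by
    intro a
    have hlhs : Filter.Tendsto (fun F : Finset ℕ => Real.sqrt (∑ k ∈ F, ‖(a : ∀ _ : ℕ, ℂ) k‖ ^ 2))
        Filter.atTop (nhds ‖a‖) := by
      rw [hnorm_a a]
      have h2 : Filter.Tendsto ((fun s : ℝ => Real.sqrt s) ∘
          (fun F : Finset ℕ => ∑ k ∈ F, ‖(a : ∀ _ : ℕ, ℂ) k‖ ^ 2)) Filter.atTop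
          (nhds (Real.sqrt (∑' k, ‖(a : ∀ _ : ℕ, ℂ) k‖ ^ 2))) :=
        Filter.Tendsto.comp (Real.continuous_sqrt.tendsto _) (hsummable2 a).hasSum
      exact h2
    have hrhs : Filter.Tendsto (fun F : Finset ℕ => K * ‖∑ k ∈ F, (a : ∀ _ : ℕ, ℂ) k • y k‖)
        Filter.atTop (nhds (K * ‖Φ₀ a‖)) := (hnormlim a).const_mul K
    exact le_of_tendsto_of_tendsto' hlhs hrhs fun F => hfin1 F _
  set Φ : lp (fun _ : ℕ => ℂ) 2 →L[ℂ] H := Φ₀.mkContinuous K hΦub with hPhidef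
  have hΦapp : ∀ a, Φ a = ∑' k, (a : ∀ _ : ℕ, ℂ) k • y k := fun a => rfl
  -- Φ hits the eigenvectors
  have hsingle : ∀ n : ℕ, Φ (lp.single 2 n ((t n : ℂ))) = x n := by
    intro n
    rw [hΦapp]
    rw [tsum_eq_single n]
    · have hco : ((lp.single 2 n ((t n : ℂ)) : lp (fun _ : ℕ => ℂ) 2) : ∀ _ : ℕ, ℂ) n
          = (t n : ℂ) := by
        rw [lp.single_apply]
        simp
      rw [hco]
      show (t n : ℂ) • (((t n : ℝ) : ℂ))⁻¹ • x n = x n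
      rw [smul_smul, mul_inv_cancel₀ (Complex.ofReal_ne_zero.2 (ne_of_gt (ht0 n))), one_smul]
    · intro k hk
      have hco : ((lp.single 2 n ((t n : ℂ)) : lp (fun _ : ℕ => ℂ) 2) : ∀ _ : ℕ, ℂ) k = 0 := by
        rw [lp.single_apply]
        simp [hk]
      rw [hco, zero_smul]
  -- bijectivity
  have hinjΦ : Function.Injective Φ := by
    intro a b hab
    have h1 := hΦlb (a - b)
    rw [map_sub] at h1
    have h2 : Φ₀ a = Φ a := rfl
    have hab' : Φ₀ a - Φ₀ b = 0 := by
      show Φ a - Φ b = 0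
      rw [hab, sub_self]
    rw [hab', norm_zero, mul_zero] at h1
    have := le_antisymm h1 (norm_nonneg _)
    rwa [norm_eq_zero, sub_eq_zero] at this
  have hker : LinearMap.ker (Φ : lp (fun _ : ℕ => ℂ) 2 →ₗ[ℂ] H) = ⊥ := (LinearMap.ker_eq_bot (f := (Φ : lp (fun _ : ℕ => ℂ) 2 →ₗ[ℂ] H))).2 hinjΦ
  have hclosed : IsClosed (Set.range Φ) := by
    have hanti : AntilipschitzWith K.toNNReal Φ := by
      apply AddMonoidHomClass.antilipschitz_of_bound
      intro a
      rw [Real.coe_toNNReal _ (le_of_lt hK)]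
      exact hΦlb a
    exact hanti.isClosed_range Φ.uniformContinuous
  have hrange : LinearMap.range (Φ : lp (fun _ : ℕ => ℂ) 2 →ₗ[ℂ] H) = ⊤ := by
    have hsub : Submodule.span ℂ (Set.range x) ≤ LinearMap.range (Φ : lp (fun _ : ℕ => ℂ) 2 →ₗ[ℂ] H) := by
      rw [Submodule.span_le]
      rintro _ ⟨n, rfl⟩
      exact ⟨lp.single 2 n ((t n : ℂ)), hsingle n⟩
    have hcl := Submodule.topologicalClosure_minimal _ hsub hclosed
    rw [hspan] at hcl
    exact top_unique hcl
  set e := ContinuousLinearEquiv.ofBijective Φ hker hrange with hedef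
  have he : ∀ a, e a = Φ a := fun a => rfl
  -- intertwining
  have hTΦ : ∀ a, T (Φ a) = Φ (D a) := by
    intro a
    rw [hΦapp, hΦapp, ContinuousLinearMap.map_tsum T (hsummable_vec a)]
    apply tsum_congr
    intro k
    rw [map_smul, hTy, smul_smul, hD a k, mul_comm]
  refine ⟨e.symm, ?_⟩
  intro v
  have h1 : Φ (e.symm v) = v := by
    rw [← he]
    exact e.apply_symm_apply v
  calc e.symm (T v) = e.symm (T (Φ (e.symm v))) := by rw [h1]
    _ = e.symm (Φ (D (e.symm v))) := by rw [hTΦ]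
    _ = e.symm (e (D (e.symm v))) := by rw [he]
    _ = D (e.symm v) := e.symm_apply_apply _
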